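/- Let C = (C₁, C₂) ∈ ℝ^{d×N} with C₁ ∈ ℝ^{d×c}, C₂ ∈ ℝ^{d×(N-c)}; K = (K₁; K₂) ∈ ℝ^{N×d} with K₁ ∈ ℝ^{c×d}, K₂ ∈ ℝ^{(N-c)×d}; and E₂ ∈ ℝ^{(N-c)×(N-c)}. Suppose the block matrix G = [K₁C₁, K₁C₂; K₂C₁, K₂C₂ + I - E₂] is invertible and S := I_{N-c} - E₂ + K₂C₂ is invertible. Then k(1) := I_d - C G^{-1} K satisfies k(1)·C₁ = 0_{d×c}. -/

import Mathlib

open Matrix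

theorem stmt_13 {N c d : ℕ}
    (C₁ : Matrix (Fin d) (Fin c) ℝ) (C₂ : Matrix (Fin d) (Fin (N - c)) ℝ)
    (K₁ : Matrix (Fin c) (Fin d) ℝ) (K₂ : Matrix (Fin (N - c)) (Fin d) ℝ)
    (E₂ : Matrix (Fin (N - c)) (Fin (N - c)) ℝ)
    (hG : IsUnit (Matrix.fromBlocks (K₁ * C₁) (K₁ * C₂) (K₂ * C₁) (K₂ * C₂ + 1 - E₂)))
    (hS : IsUnit ((1 : Matrix (Fin (N - c)) (Fin (N - c)) ℝ) - E₂ + K₂ * C₂))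
    (hK₁C₁ : IsUnit (K₁ * C₁)) :
    ((1 : Matrix (Fin d) (Fin d) ℝ) -
        Matrix.fromCols C₁ C₂ *
          (Matrix.fromBlocks (K₁ * C₁) (K₁ * C₂) (K₂ * C₁) (K₂ * C₂ + 1 - E₂))⁻¹ *
          Matrix.fromRows K₁ K₂) * C₁ = 0 := by
  set G := Matrix.fromBlocks (K₁ * C₁) (K₁ * C₂) (K₂ * C₁) (K₂ * C₂ + 1 - E₂) with hGdef
  have hKC₁ : Matrix.fromRows K₁ K₂ * C₁ =
      G * Matrix.fromRows (1 : Matrix (Fin c) (Fin c) ℝ)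
        (0 : Matrix (Fin (N - c)) (Fin c) ℝ) := by
    rw [hGdef, fromRows_mul, fromBlocks_mul_fromRows]
    simp [Matrix.mul_assoc]
  have := hG.invertible
  calc ((1 : Matrix (Fin d) (Fin d) ℝ) - fromCols C₁ C₂ * G⁻¹ * fromRows K₁ K₂) * C₁
      = C₁ - fromCols C₁ C₂ * (G⁻¹ * (fromRows K₁ K₂ * C₁)) := by
        rw [Matrix.sub_mul, Matrix.one_mul]
        rw [Matrix.mul_assoc, Matrix.mul_assoc]
    _ = 0 := by
        rw [hKC₁, Matrix.inv_mul_cancel_left_of_invertible,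
          fromCols_mul_fromRows]
        simp
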